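/- Let C ⊂ Sⁿ be a spherically convex body. Then C = C° if and only if C is of constant width π/2. -/

import Mathlib

open scoped RealInnerProductSpace
open Real

noncomputable section

/-- The hemisphere of `Sⁿ` centered at `P`. -/
def hemi {n : ℕ} (P : EuclideanSpace ℝ (Fin (n + 1))) :
    Set (EuclideanSpace ℝ (Fin (n + 1))) :=
  {Q | ‖Q‖ = 1 ∧ 0 ≤ ⟪P, Q⟫}

/-- Geodesic (spherical) convexity. -/
def geodesicConvex {n : ℕ} (C : Set (EuclideanSpace ℝ (Fin (n + 1)))) : Prop :=
  ∀ P ∈ C, ∀ Q ∈ C, ∀ a b : ℝ, 0 ≤ a → 0 ≤ b → 0 < a + b →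
    a • P + b • Q ≠ 0 → ‖a • P + b • Q‖⁻¹ • (a • P + b • Q) ∈ C

/-- A spherically convex body in `Sⁿ`. -/
def sConvexBody {n : ℕ} (C : Set (EuclideanSpace ℝ (Fin (n + 1)))) : Prop :=
  (∀ R ∈ C, ‖R‖ = 1) ∧ IsClosed C ∧ geodesicConvex C ∧
    (∃ E0 : EuclideanSpace ℝ (Fin (n + 1)), ‖E0‖ = 1 ∧ ∀ R ∈ C, 0 < ⟪E0, R⟫) ∧
    (∃ U : Set (EuclideanSpace ℝ (Fin (n + 1))), IsOpen U ∧
      (U ∩ {x | ‖x‖ = 1}).Nonempty ∧ U ∩ {x | ‖x‖ = 1} ⊆ C)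

/-- The spherical polar set `C° = ⋂_{P∈C} H(P)`. -/
def sPolar {n : ℕ} (W : Set (EuclideanSpace ℝ (Fin (n + 1)))) :
    Set (EuclideanSpace ℝ (Fin (n + 1))) :=
  ⋂ P ∈ W, hemi P

/-- `H(P)` is a supporting hemisphere of `C`. -/
def isSupporting {n : ℕ} (P : EuclideanSpace ℝ (Fin (n + 1)))
    (C : Set (EuclideanSpace ℝ (Fin (n + 1)))) : Prop :=
  ‖P‖ = 1 ∧ C ⊆ hemi P ∧ ∃ X ∈ C, ⟪P, X⟫ = 0

/-- Width of `C` with respect to the supporting hemisphere `H(P)`. -/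
def widthAt {n : ℕ} (C : Set (EuclideanSpace ℝ (Fin (n + 1))))
    (P : EuclideanSpace ℝ (Fin (n + 1))) : ℝ :=
  sInf {t | ∃ Q, isSupporting Q C ∧ t = π - Real.arccos ⟪P, Q⟫}

/-- `C` is of constant width `τ`. -/
def constWidth {n : ℕ} (C : Set (EuclideanSpace ℝ (Fin (n + 1)))) (τ : ℝ) : Prop :=
  ∀ P, isSupporting P C → widthAt C P = τ

namespace Stmt15Aux

variable {n : ℕ} {C : Set (EuclideanSpace ℝ (Fin (n + 1)))}
variable {P Q a b z w : EuclideanSpace ℝ (Fin (n + 1))}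

/-- minimum of the linear functional `⟪Q, ·⟫` over `C`. -/
def m (C : Set (EuclideanSpace ℝ (Fin (n + 1)))) (Q : EuclideanSpace ℝ (Fin (n + 1))) : ℝ :=
  sInf ((fun X => ⟪Q, X⟫) '' C)

lemma bddBelow_image (hunit : ∀ X ∈ C, ‖X‖ = 1) (Q : EuclideanSpace ℝ (Fin (n + 1))) :
    BddBelow ((fun X => ⟪Q, X⟫) '' C) := by
  refine ⟨-‖Q‖, ?_⟩
  rintro t ⟨X, hX, rfl⟩
  have h := abs_real_inner_le_norm Q X
  rw [hunit X hX, mul_one] at h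
  have := neg_abs_le (⟪Q, X⟫ : ℝ)
  dsimp only
  linarith

lemma m_le (hunit : ∀ X ∈ C, ‖X‖ = 1) (hX : P ∈ C) : m C Q ≤ ⟪Q, P⟫ :=
  csInf_le (bddBelow_image hunit Q) ⟨P, hX, rfl⟩

lemma le_m (hne : C.Nonempty) {c : ℝ} (h : ∀ X ∈ C, c ≤ ⟪Q, X⟫) : c ≤ m C Q :=
  le_csInf (hne.image _) (by rintro t ⟨X, hX, rfl⟩; exact h X hX)

lemma isCompact_of (hunit : ∀ X ∈ C, ‖X‖ = 1) (hclosed : IsClosed C) : IsCompact C := by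
  refine Metric.isCompact_of_isClosed_isBounded hclosed ?_
  rw [Metric.isBounded_iff_subset_closedBall 0]
  exact ⟨1, fun x hx => by simp [Metric.mem_closedBall, dist_eq_norm, hunit x hx]⟩

lemma m_attained (hcomp : IsCompact C) (hne : C.Nonempty) (hunit : ∀ X ∈ C, ‖X‖ = 1)
    (Q : EuclideanSpace ℝ (Fin (n + 1))) : ∃ X ∈ C, m C Q = ⟪Q, X⟫ := by
  obtain ⟨X0, hX0, hmin⟩ := hcomp.exists_isMinOn (f := fun X => (⟪Q, X⟫ : ℝ)) hne
    ((continuous_const.inner continuous_id).continuousOn)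
  refine ⟨X0, hX0, le_antisymm (m_le hunit hX0) (le_m hne fun X hX => hmin hX)⟩

lemma m_sub_le (hcomp : IsCompact C) (hne : C.Nonempty) (hunit : ∀ X ∈ C, ‖X‖ = 1)
    (Q Q' : EuclideanSpace ℝ (Fin (n + 1))) : m C Q ≤ m C Q' + ‖Q - Q'‖ := by
  obtain ⟨X0, hX0, hm⟩ := m_attained hcomp hne hunit Q'
  have h1 : m C Q ≤ ⟪Q, X0⟫ := m_le hunit hX0
  have h2 : ⟪Q - Q', X0⟫ ≤ ‖Q - Q'‖ := by
    have := real_inner_le_norm (Q - Q') X0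
    rw [hunit X0 hX0, mul_one] at this
    exact this
  have h3 : (⟪Q, X0⟫ : ℝ) = ⟪Q', X0⟫ + ⟪Q - Q', X0⟫ := by
    rw [inner_sub_left]; ring
  linarith

lemma m_continuous (hcomp : IsCompact C) (hne : C.Nonempty) (hunit : ∀ X ∈ C, ‖X‖ = 1) :
    Continuous (m C) := by
  refine (LipschitzWith.of_dist_le_mul (K := 1) fun x y => ?_).continuous
  rw [Real.dist_eq, NNReal.coe_one, one_mul, dist_eq_norm, abs_sub_le_iff]
  constructor
  · linarith [m_sub_le hcomp hne hunit x y]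
  · linarith [m_sub_le hcomp hne hunit y x, norm_sub_rev x y]

lemma isSupporting_of (hunit : ∀ X ∈ C, ‖X‖ = 1) (hQ : ‖Q‖ = 1)
    (h1 : ∀ X ∈ C, 0 ≤ ⟪Q, X⟫) (h2 : ∃ X ∈ C, ⟪Q, X⟫ = 0) : isSupporting Q C :=
  ⟨hQ, fun X hX => ⟨hunit X hX, h1 X hX⟩, h2⟩

lemma isSupporting_iff (hcomp : IsCompact C) (hne : C.Nonempty) (hunit : ∀ X ∈ C, ‖X‖ = 1) :
    isSupporting Q C ↔ ‖Q‖ = 1 ∧ m C Q = 0 := by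
  constructor
  · rintro ⟨hQ, hsub, X0, hX0, hX0'⟩
    refine ⟨hQ, le_antisymm (hX0' ▸ m_le hunit hX0) (le_m hne fun X hX => (hsub hX).2)⟩
  · rintro ⟨hQ, hm⟩
    obtain ⟨X0, hX0, hX0'⟩ := m_attained hcomp hne hunit Q
    exact isSupporting_of hunit hQ (fun X hX => hm ▸ m_le hunit hX)
      ⟨X0, hX0, by rw [← hX0', hm]⟩

lemma mem_sPolar_iff (hne : C.Nonempty) :
    a ∈ sPolar C ↔ ‖a‖ = 1 ∧ ∀ X ∈ C, 0 ≤ ⟪X, a⟫ := by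
  simp only [sPolar, Set.mem_iInter, hemi, Set.mem_setOf_eq]
  constructor
  · intro h
    obtain ⟨X0, hX0⟩ := hne
    exact ⟨(h X0 hX0).1, fun X hX => (h X hX).2⟩
  · rintro ⟨h1, h2⟩ X hX
    exact ⟨h1, h2 X hX⟩

-- continue

variable {n : ℕ} {C : Set (EuclideanSpace ℝ (Fin (n + 1)))}
variable {P Q a b z w : EuclideanSpace ℝ (Fin (n + 1))}

lemma arccos_le_arccos' {x y : ℝ} (h : x ≤ y) : Real.arccos y ≤ Real.arccos x := by
  simp only [Real.arccos_eq_pi_div_two_sub_arcsin]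
  have := Real.monotone_arcsin h
  linarith

lemma widthSet_bddBelow (P : EuclideanSpace ℝ (Fin (n + 1))) :
    BddBelow {t | ∃ Q, isSupporting Q C ∧ t = π - Real.arccos ⟪P, Q⟫} := by
  refine ⟨0, ?_⟩
  rintro t ⟨Q, hQ, rfl⟩
  have := Real.arccos_le_pi (⟪P, Q⟫ : ℝ)
  linarith

/-- (a): any two supporting hemisphere poles make a non-obtuse angle. -/
lemma acute_of_width (hW : constWidth C (π / 2)) (hP : isSupporting P C)
    (hQ : isSupporting Q C) : 0 ≤ ⟪P, Q⟫ := by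
  have hw := hW P hP
  have hle : π / 2 ≤ π - Real.arccos ⟪P, Q⟫ := by
    have := csInf_le (widthSet_bddBelow (C := C) P) (show _ ∈ _ from ⟨Q, hQ, rfl⟩)
    rw [widthAt] at hw
    linarith [hw ▸ this]
  have harc : Real.arccos ⟪P, Q⟫ ≤ π / 2 := by linarith
  by_contra hneg
  push_neg at hneg
  have : Real.arcsin ⟪P, Q⟫ < 0 := by
    have := Real.arcsin_pos.2 (show (0:ℝ) < -⟪P, Q⟫ by linarith)
    rw [Real.arcsin_neg] at this
    linarith
  rw [Real.arccos_eq_pi_div_two_sub_arcsin] at harc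
  linarith

/-- (b'): every supporting pole has an orthogonal supporting pole. -/
lemma exists_orth (hcomp : IsCompact C) (hne : C.Nonempty) (hunit : ∀ X ∈ C, ‖X‖ = 1)
    (hW : constWidth C (π / 2)) (hP : isSupporting P C) :
    ∃ Q, isSupporting Q C ∧ ⟪P, Q⟫ = 0 := by
  set Sp := {Q : EuclideanSpace ℝ (Fin (n + 1)) | isSupporting Q C} with hSp
  have hSpclosed : IsClosed Sp := by
    have : Sp = {Q | ‖Q‖ = 1} ∩ (m C) ⁻¹' {0} := by
      ext Q
      simp only [hSp, Set.mem_setOf_eq, Set.mem_inter_iff, Set.mem_preimage,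
        Set.mem_singleton_iff, isSupporting_iff hcomp hne hunit]
    rw [this]
    exact (isClosed_eq continuous_norm continuous_const).inter
      (IsClosed.preimage (m_continuous hcomp hne hunit) isClosed_singleton)
  have hSpcomp : IsCompact Sp := by
    refine Metric.isCompact_of_isClosed_isBounded hSpclosed ?_
    rw [Metric.isBounded_iff_subset_closedBall 0]
    exact ⟨1, fun x hx => by simp [Metric.mem_closedBall, dist_eq_norm, hx.1]⟩
  have hSpne : Sp.Nonempty := ⟨P, hP⟩
  obtain ⟨q, hq, hqmin⟩ := hSpcomp.exists_isMinOn (f := fun Q => (⟪P, Q⟫ : ℝ)) hSpne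
    ((continuous_const.inner continuous_id).continuousOn)
  have hq0 : 0 ≤ ⟪P, q⟫ := acute_of_width hW hP hq
  refine ⟨q, hq, le_antisymm ?_ hq0⟩
  by_contra hpos
  push_neg at hpos
  -- every supporting Q has ⟪P,Q⟫ ≥ μ := ⟪P,q⟫ > 0, so the width at P exceeds π/2
  have hlb : π - Real.arccos ⟪P, q⟫ ≤ widthAt C P := by
    refine le_csInf ⟨π - Real.arccos ⟪P, P⟫, P, hP, rfl⟩ ?_
    rintro t ⟨Q, hQ, rfl⟩
    have h1 : (⟪P, q⟫ : ℝ) ≤ ⟪P, Q⟫ := hqmin hQ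
    linarith [arccos_le_arccos' h1]
  have harc : Real.arccos ⟪P, q⟫ < π / 2 := by
    rw [Real.arccos_eq_pi_div_two_sub_arcsin]
    linarith [Real.arcsin_pos.2 hpos]
  rw [hW P hP] at hlb
  linarith



variable {n : ℕ} {C : Set (EuclideanSpace ℝ (Fin (n + 1)))}
variable {P Q a b z w : EuclideanSpace ℝ (Fin (n + 1))}

lemma sPolar_isClosed : IsClosed (sPolar C) := by
  refine isClosed_biInter fun P _ => ?_
  have : hemi P = {Q : EuclideanSpace ℝ (Fin (n+1)) | ‖Q‖ = 1} ∩ {Q | 0 ≤ ⟪P, Q⟫} := rfl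
  rw [this]
  exact (isClosed_eq continuous_norm continuous_const).inter
    (isClosed_le continuous_const (continuous_const.inner continuous_id))

/-- If `(a,b)` minimizes the inner product over `C° × C°` and the minimum is negative,
then `a` is a supporting pole. -/
lemma minimizer_supporting (hcomp : IsCompact C) (hne : C.Nonempty)
    (hunit : ∀ X ∈ C, ‖X‖ = 1) (ha : a ∈ sPolar C) (hb : b ∈ sPolar C)
    (hmin : ∀ a' ∈ sPolar C, ⟪a, b⟫ ≤ ⟪a', b⟫) (hμ : (⟪a, b⟫ : ℝ) < 0) :
    isSupporting a C := by
  obtain ⟨hanorm, hain⟩ := (mem_sPolar_iff hne).1 ha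
  obtain ⟨hbnorm, hbin⟩ := (mem_sPolar_iff hne).1 hb
  have hma : 0 ≤ m C a := le_m hne fun X hX => by
    rw [real_inner_comm]; exact hain X hX
  rcases eq_or_lt_of_le hma with h0 | hpos
  · exact (isSupporting_iff hcomp hne hunit).2 ⟨hanorm, h0.symm⟩
  exfalso
  set ε := m C a with hε
  set a' := a - ε • b with ha'
  set μ := (⟪a, b⟫ : ℝ) with hμdef
  have hbb : (⟪b, b⟫ : ℝ) = 1 := by
    rw [real_inner_self_eq_norm_mul_norm, hbnorm]; norm_num
  have h1 : ∀ X ∈ C, 0 ≤ ⟪a', X⟫ := by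
    intro X hX
    have hax : ε ≤ ⟪a, X⟫ := m_le hunit hX
    have hbx : (⟪b, X⟫ : ℝ) ≤ 1 := by
      have := real_inner_le_norm b X
      rw [hbnorm, hunit X hX, one_mul] at this
      exact this
    have : (⟪a', X⟫ : ℝ) = ⟪a, X⟫ - ε * ⟪b, X⟫ := by
      rw [ha', inner_sub_left, real_inner_smul_left]
    rw [this]
    nlinarith
  have ha'ne : a' ≠ 0 := by
    intro h
    have : a = ε • b := by rwa [ha', sub_eq_zero] at h
    have : μ = ε := by rw [hμdef, this, real_inner_smul_left, hbb, mul_one]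
    linarith
  have hg : 0 < ‖a'‖ := norm_pos_iff.2 ha'ne
  set g := ‖a'‖ with hgdef
  have hahat : ‖a'‖⁻¹ • a' ∈ sPolar C := by
    refine (mem_sPolar_iff hne).2 ⟨?_, fun X hX => ?_⟩
    · rw [norm_smul, norm_inv, norm_norm, inv_mul_cancel₀ (ne_of_gt hg)]
    · rw [real_inner_comm, real_inner_smul_left]
      exact mul_nonneg (inv_nonneg.2 hg.le) (h1 X hX)
  have hval : (⟪‖a'‖⁻¹ • a', b⟫ : ℝ) = g⁻¹ * (μ - ε) := by
    rw [real_inner_smul_left, ha', inner_sub_left, real_inner_smul_left, hbb]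
    rw [← ha', ← hgdef, ← hμdef]; ring
  have hminap := hmin _ hahat
  rw [hval] at hminap
  -- μ ≤ g⁻¹ (μ - ε), so g μ ≤ μ - ε
  have hgm : g * μ ≤ μ - ε := by
    have := mul_le_mul_of_nonneg_left hminap hg.le
    rwa [mul_inv_cancel_left₀ (ne_of_gt hg)] at this
  have hgle : g ≤ 1 + ε := by
    have h2 : ‖a'‖ ≤ ‖a‖ + ‖ε • b‖ := norm_sub_le a (ε • b)
    rw [hanorm, norm_smul, Real.norm_eq_abs, abs_of_pos hpos, hbnorm, mul_one] at h2
    exact h2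
  have hμlb : -1 ≤ μ := by
    have := abs_real_inner_le_norm a b
    rw [hanorm, hbnorm, mul_one] at this
    linarith [neg_abs_le μ]
  -- derive μ ≤ -1
  have hμle : μ ≤ -1 := by nlinarith
  have hμeq : μ = -1 := le_antisymm hμle hμlb
  -- then a = -b
  have habzero : a + b = 0 := by
    have : (⟪a + b, a + b⟫ : ℝ) = 0 := by
      rw [real_inner_add_add_self, real_inner_self_eq_norm_mul_norm,
        real_inner_self_eq_norm_mul_norm, hanorm, hbnorm, ← hμdef, hμeq]
      ring
    exact inner_self_eq_zero.1 this
  obtain ⟨X0, hX0⟩ := hne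
  have h3 : (⟪a, X0⟫ : ℝ) = -⟪b, X0⟫ := by
    rw [eq_neg_of_add_eq_zero_left habzero, inner_neg_left]
  have h4 : 0 ≤ ⟪b, X0⟫ := by rw [real_inner_comm]; exact hbin X0 hX0
  have h5 : ε ≤ ⟪a, X0⟫ := m_le hunit hX0
  linarith

/-- Any two points of the polar body make a non-obtuse angle. -/
lemma polar_acute (hcomp : IsCompact C) (hne : C.Nonempty) (hunit : ∀ X ∈ C, ‖X‖ = 1)
    (hW : constWidth C (π / 2)) (ha : a ∈ sPolar C) (hb : b ∈ sPolar C) :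
    0 ≤ ⟪a, b⟫ := by
  by_contra hneg
  push_neg at hneg
  have hPoclosed : IsClosed (sPolar C) := sPolar_isClosed
  have hPocomp : IsCompact (sPolar C) := by
    refine Metric.isCompact_of_isClosed_isBounded hPoclosed ?_
    rw [Metric.isBounded_iff_subset_closedBall 0]
    exact ⟨1, fun x hx => by
      simp [Metric.mem_closedBall, dist_eq_norm, ((mem_sPolar_iff hne).1 hx).1]⟩
  have hPone : (sPolar C).Nonempty := ⟨a, ha⟩
  obtain ⟨⟨u, v⟩, huv, hminuv⟩ := (hPocomp.prod hPocomp).exists_isMinOn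
    (f := fun p => (⟪p.1, p.2⟫ : ℝ)) (hPone.prod hPone)
    ((continuous_fst.inner continuous_snd).continuousOn)
  have hu : u ∈ sPolar C := huv.1
  have hv : v ∈ sPolar C := huv.2
  have hμ : (⟪u, v⟫ : ℝ) < 0 :=
    lt_of_le_of_lt (hminuv (Set.mk_mem_prod ha hb)) hneg
  have hus : isSupporting u C :=
    minimizer_supporting hcomp hne hunit hu hv
      (fun a' ha' => hminuv (Set.mk_mem_prod ha' hv)) hμ
  have hvs : isSupporting v C := by
    refine minimizer_supporting hcomp hne hunit hv hu
      (fun b' hb' => ?_) (by rwa [real_inner_comm])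
    have h6 := hminuv (Set.mk_mem_prod hu hb')
    simp only [Set.mem_setOf_eq] at h6
    calc (⟪v, u⟫ : ℝ) = ⟪u, v⟫ := (real_inner_comm u v)
      _ ≤ ⟪u, b'⟫ := h6
      _ = ⟪b', u⟫ := (real_inner_comm b' u)
  linarith [acute_of_width hW hus hvs]



variable {n : ℕ} {C : Set (EuclideanSpace ℝ (Fin (n + 1)))}
variable {P Q a b z w : EuclideanSpace ℝ (Fin (n + 1))}

/-- The cone over `C`. -/
def K (C : Set (EuclideanSpace ℝ (Fin (n + 1)))) : Set (EuclideanSpace ℝ (Fin (n + 1))) :=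
  {y | ∃ r : ℝ, 0 ≤ r ∧ ∃ x ∈ C, y = r • x}

lemma K_convex (hconv : geodesicConvex C) : Convex ℝ (K C) := by
  rintro x ⟨r, hr, xc, hxc, rfl⟩ y ⟨s, hs, yc, hyc, rfl⟩ p q hp hq hpq
  have hre : p • r • xc + q • s • yc = (p * r) • xc + (q * s) • yc := by
    rw [smul_smul, smul_smul]
  rw [hre]
  set A := p * r with hA
  set B := q * s with hB
  have hA0 : 0 ≤ A := mul_nonneg hp hr
  have hB0 : 0 ≤ B := mul_nonneg hq hs
  by_cases hV : A • xc + B • yc = 0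
  · exact ⟨0, le_refl 0, xc, hxc, by rw [hV, zero_smul]⟩
  · rcases eq_or_lt_of_le (add_nonneg hA0 hB0) with h0 | hpos
    · exfalso
      apply hV
      have hA' : A = 0 := by linarith
      have hB' : B = 0 := by linarith
      rw [hA', hB', zero_smul, zero_smul, add_zero]
    · have hu := hconv xc hxc yc hyc A B hA0 hB0 hpos hV
      exact ⟨‖A • xc + B • yc‖, norm_nonneg _, _, hu,
        (smul_inv_smul₀ (norm_ne_zero_iff.2 hV) _).symm⟩

lemma K_closed (hclosed : IsClosed C) (hunit : ∀ X ∈ C, ‖X‖ = 1) : IsClosed (K C) := by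
  refine isClosed_of_closure_subset fun y hy => ?_
  obtain ⟨f, hf, hlim⟩ := mem_closure_iff_seq_limit.1 hy
  choose r hr0 x hxC heq using hf
  have hnorm : ∀ k, ‖f k‖ = r k := by
    intro k
    rw [heq k, norm_smul, Real.norm_eq_abs, abs_of_nonneg (hr0 k), hunit _ (hxC k), mul_one]
  have hrlim : Filter.Tendsto r Filter.atTop (nhds ‖y‖) := by
    have := hlim.norm
    simpa [hnorm] using this
  by_cases hy0 : ‖y‖ = 0
  · exact ⟨0, le_refl 0, x 0, hxC 0, by
      rw [norm_eq_zero] at hy0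
      rw [hy0, zero_smul]⟩
  · have hy0' : 0 < ‖y‖ := (norm_nonneg y).lt_of_ne (Ne.symm hy0)
    have hlim2 : Filter.Tendsto (fun k => (r k)⁻¹ • f k) Filter.atTop (nhds (‖y‖⁻¹ • y)) :=
      (hrlim.inv₀ hy0).smul hlim
    have hev : ∀ᶠ k in Filter.atTop, (r k)⁻¹ • f k ∈ C := by
      have hpos : ∀ᶠ k in Filter.atTop, 0 < r k := hrlim.eventually (eventually_gt_nhds hy0')
      filter_upwards [hpos] with k hk
      rw [heq k, smul_smul, inv_mul_cancel₀ hk.ne', one_smul]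
      exact hxC k
    have hmem := hclosed.mem_of_tendsto hlim2 hev
    exact ⟨‖y‖, norm_nonneg y, _, hmem, (smul_inv_smul₀ hy0 y).symm⟩

/-- `C° ⊆ C` when `C` has constant width `π/2`. -/
lemma polar_subset_self (hunit : ∀ X ∈ C, ‖X‖ = 1) (hclosed : IsClosed C)
    (hconv : geodesicConvex C) (hne : C.Nonempty) (hW : constWidth C (π / 2)) :
    sPolar C ⊆ C := by
  have hcomp : IsCompact C := isCompact_of hunit hclosed
  intro w hw
  by_contra hwC
  have hwn : ‖w‖ = 1 := ((mem_sPolar_iff hne).1 hw).1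
  have hwK : w ∉ K C := by
    rintro ⟨r, hr, x, hx, heq⟩
    have h1 : (1:ℝ) = r := by
      have h2 := congrArg norm heq
      rwa [hwn, norm_smul, Real.norm_eq_abs, abs_of_nonneg hr, hunit x hx, mul_one] at h2
    rw [heq, ← h1, one_smul] at hwC
    exact hwC hx
  obtain ⟨f, u, hfu, hufw⟩ :=
    geometric_hahn_banach_closed_point (K_convex hconv) (K_closed hclosed hunit) hwK
  obtain ⟨X0, hX0⟩ := id hne
  have hu0 : 0 < u := by
    have h00 := hfu 0 ⟨0, le_refl 0, X0, hX0, (zero_smul ℝ X0).symm⟩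
    rwa [map_zero] at h00
  have hfle : ∀ x ∈ K C, f x ≤ 0 := by
    rintro x' hx'
    by_contra hfx
    push_neg at hfx
    obtain ⟨r, hr, xc, hxc, rfl⟩ := hx'
    have hmem : ((u + 1) / f (r • xc)) • (r • xc) ∈ K C := by
      refine ⟨(u + 1) / f (r • xc) * r, mul_nonneg (by positivity) hr, xc, hxc, ?_⟩
      rw [smul_smul]
    have h2 := hfu _ hmem
    rw [map_smul, smul_eq_mul, div_mul_cancel₀ _ hfx.ne'] at h2
    linarith
  set v := (InnerProductSpace.toDual ℝ (EuclideanSpace ℝ (Fin (n + 1)))).symm f with hv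
  have hvx : ∀ x, (⟪v, x⟫ : ℝ) = f x := fun x => InnerProductSpace.toDual_symm_apply
  have hfw : 0 < f w := lt_trans hu0 hufw
  have hvn : ‖v‖ ≠ 0 := by
    intro h
    rw [norm_eq_zero] at h
    have := hvx w
    rw [h, inner_zero_left] at this
    linarith
  have huvP : -(‖v‖⁻¹ • v) ∈ sPolar C := by
    refine (mem_sPolar_iff hne).2 ⟨?_, fun X hX => ?_⟩
    · rw [norm_neg, norm_smul, norm_inv, norm_norm, inv_mul_cancel₀ hvn]
    · have hXK : f X ≤ 0 := hfle X ⟨1, zero_le_one, X, hX, (one_smul ℝ X).symm⟩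
      rw [inner_neg_right, inner_smul_right]
      have : (⟪X, v⟫ : ℝ) = f X := by rw [real_inner_comm]; exact hvx X
      rw [this]
      have : 0 ≤ ‖v‖⁻¹ := by positivity
      nlinarith
  have hacute := polar_acute hcomp hne hunit hW huvP hw
  rw [inner_neg_left, real_inner_smul_left, hvx w] at hacute
  have hvpos : 0 < ‖v‖⁻¹ := by positivity
  nlinarith

/-- `C ⊆ C°` when `C` has constant width `π/2`. -/
lemma self_subset_polar (hunit : ∀ X ∈ C, ‖X‖ = 1) (hclosed : IsClosed C)
    (hne : C.Nonempty) (hE0 : ∃ E0, ‖E0‖ = 1 ∧ ∀ R ∈ C, 0 < ⟪E0, R⟫)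
    (hW : constWidth C (π / 2)) : C ⊆ sPolar C := by
  have hcomp : IsCompact C := isCompact_of hunit hclosed
  intro z hz
  by_contra hzP
  have hzn : ‖z‖ = 1 := hunit z hz
  have hex : ∃ X ∈ C, (⟪X, z⟫ : ℝ) < 0 := by
    by_contra h
    push_neg at h
    exact hzP ((mem_sPolar_iff hne).2 ⟨hzn, h⟩)
  obtain ⟨X0, hX0, hX0neg⟩ := hex
  have hmz : m C z < 0 := by
    have := m_le (Q := z) hunit hX0
    rw [real_inner_comm] at hX0neg
    linarith
  obtain ⟨E0, hE0n, hE0pos⟩ := hE0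
  have hmE0 : 0 < m C E0 := by
    obtain ⟨X1, hX1, h⟩ := m_attained hcomp hne hunit E0
    rw [h]
    exact hE0pos X1 hX1
  set φ : ℝ → EuclideanSpace ℝ (Fin (n + 1)) := fun t => (1 - t) • E0 + t • z with hφ
  have hφc : Continuous φ := by
    apply Continuous.add
    · exact (continuous_const.sub continuous_id).smul continuous_const
    · exact continuous_id.smul continuous_const
  set g : ℝ → ℝ := fun t => m C (φ t) with hg
  have hgc : ContinuousOn g (Set.Icc (0:ℝ) 1) :=
    ((m_continuous hcomp hne hunit).comp hφc).continuousOn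
  have hg0 : 0 < g 0 := by
    have : φ 0 = E0 := by simp [hφ]
    simpa [hg, this] using hmE0
  have hg1 : g 1 < 0 := by
    have : φ 1 = z := by simp [hφ]
    simpa [hg, this] using hmz
  obtain ⟨t, ht, hgt⟩ := intermediate_value_Icc' (by norm_num : (0:ℝ) ≤ 1) hgc
    (Set.mem_Icc.2 ⟨hg1.le, hg0.le⟩)
  have ht1 : t < 1 := by
    rcases lt_or_eq_of_le ht.2 with h | h
    · exact h
    · exfalso; rw [h] at hgt; linarith
  set p' := φ t with hp'
  have hp'pos : 0 < ⟪E0, p'⟫ := by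
    have hcalc : (⟪E0, p'⟫ : ℝ) = (1 - t) * (‖E0‖ * ‖E0‖) + t * ⟪E0, z⟫ := by
      rw [hp', hφ]
      simp only [inner_add_right, real_inner_smul_right, real_inner_self_eq_norm_mul_norm]
    rw [hcalc, hE0n]
    have h1 : (0:ℝ) < ⟪E0, z⟫ := hE0pos z hz
    nlinarith [ht.1]
  have hp'ne : p' ≠ 0 := by
    intro h
    rw [h, inner_zero_right] at hp'pos
    exact lt_irrefl _ hp'pos
  have hp'n : 0 < ‖p'‖ := norm_pos_iff.2 hp'ne
  have hp'0 : ∀ X ∈ C, 0 ≤ ⟪p', X⟫ := by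
    intro X hX
    have := m_le (Q := p') hunit hX
    have hmp' : m C p' = 0 := hgt
    linarith
  obtain ⟨Xc, hXc, hXceq⟩ := m_attained hcomp hne hunit p'
  have hXc0 : (⟪p', Xc⟫ : ℝ) = 0 := by rw [← hXceq]; exact hgt
  set p := ‖p'‖⁻¹ • p' with hp
  have hpsup : isSupporting p C := by
    refine isSupporting_of hunit ?_ (fun X hX => ?_) ⟨Xc, hXc, ?_⟩
    · rw [hp, norm_smul, norm_inv, norm_norm, inv_mul_cancel₀ hp'n.ne']
    · rw [hp, real_inner_smul_left]
      exact mul_nonneg (by positivity) (hp'0 X hX)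
    · rw [hp, real_inner_smul_left, hXc0, mul_zero]
  obtain ⟨q, hqsup, hpq⟩ := exists_orth hcomp hne hunit hW hpsup
  have hqn : ‖q‖ = 1 := hqsup.1
  have hqP : q ∈ sPolar C := (mem_sPolar_iff hne).2 ⟨hqn, fun X hX => by
    rw [real_inner_comm]; exact (hqsup.2.1 hX).2⟩
  set ε := (1 - t) * m C E0 with hεdef
  have hεpos : 0 < ε := mul_pos (by linarith) hmE0
  set d := (1 - t) • E0 - ε • q with hd
  have hdX : ∀ X ∈ C, 0 ≤ ⟪d, X⟫ := by
    intro X hX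
    have h1 : m C E0 ≤ ⟪E0, X⟫ := m_le hunit hX
    have h2 : (⟪q, X⟫ : ℝ) ≤ 1 := by
      have := real_inner_le_norm q X
      rwa [hqn, hunit X hX, one_mul] at this
    have hcalc : (⟪d, X⟫ : ℝ) = (1 - t) * ⟪E0, X⟫ - ε * ⟪q, X⟫ := by
      rw [hd, inner_sub_left, real_inner_smul_left, real_inner_smul_left]
    rw [hcalc, hεdef]
    nlinarith [ht.1]
  have hkey : p' - ε • q = d + t • z := by
    rw [hd, hp', hφ]
    show (1 - t) • E0 + t • z - ε • q = (1 - t) • E0 - ε • q + t • z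
    abel
  have hp'q : (⟪p', q⟫ : ℝ) = 0 := by
    rw [hp, real_inner_smul_left] at hpq
    rcases mul_eq_zero.1 hpq with h | h
    · exfalso; rw [inv_eq_zero] at h; exact hp'n.ne' h
    · exact h
  have hL : (⟪p' - ε • q, q⟫ : ℝ) = -ε := by
    rw [inner_sub_left, real_inner_smul_left, hp'q]
    have : (⟪q, q⟫ : ℝ) = 1 := by
      rw [real_inner_self_eq_norm_mul_norm, hqn]; norm_num
    rw [this]; ring
  have hdq : 0 ≤ ⟪d, q⟫ := by
    rcases eq_or_ne d 0 with h | h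
    · rw [h, inner_zero_left]
    · have hdn : 0 < ‖d‖ := norm_pos_iff.2 h
      have hdP : ‖d‖⁻¹ • d ∈ sPolar C := by
        refine (mem_sPolar_iff hne).2 ⟨?_, fun X hX => ?_⟩
        · rw [norm_smul, norm_inv, norm_norm, inv_mul_cancel₀ hdn.ne']
        · rw [real_inner_comm, real_inner_smul_left]
          exact mul_nonneg (by positivity) (hdX X hX)
      have hac := polar_acute hcomp hne hunit hW hdP hqP
      rw [real_inner_smul_left] at hac
      have hdninv : 0 < ‖d‖⁻¹ := by positivity
      nlinarith
  have hzq : 0 ≤ ⟪z, q⟫ := by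
    rw [real_inner_comm]
    exact (hqsup.2.1 hz).2
  have hR : 0 ≤ ⟪d + t • z, q⟫ := by
    rw [inner_add_left, real_inner_smul_left]
    exact add_nonneg hdq (mul_nonneg ht.1 hzq)
  rw [← hkey, hL] at hR
  linarith

/-- forward direction. -/
lemma forward_dir (hunit : ∀ X ∈ C, ‖X‖ = 1) (hne : C.Nonempty)
    (h : C = sPolar C) : constWidth C (π / 2) := by
  intro P hP
  have hPpolar : P ∈ sPolar C := (mem_sPolar_iff hne).2
    ⟨hP.1, fun X hX => by rw [real_inner_comm]; exact (hP.2.1 hX).2⟩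
  have hPC : P ∈ C := by rw [h]; exact hPpolar
  obtain ⟨Xc, hXc, hXc0⟩ := hP.2.2
  have hXcpolar : Xc ∈ sPolar C := by rw [← h]; exact hXc
  have hXcsup : isSupporting Xc C := by
    refine isSupporting_of hunit (hunit Xc hXc) (fun Y hY => ?_)
      ⟨P, hPC, by rw [real_inner_comm]; exact hXc0⟩
    have h2 := ((mem_sPolar_iff hne).1 hXcpolar).2 Y hY
    rwa [real_inner_comm]
  rw [widthAt]
  apply le_antisymm
  · have heq : π - Real.arccos ⟪P, Xc⟫ = π / 2 := by
      rw [hXc0, Real.arccos_zero]; ring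
    exact heq ▸ csInf_le (widthSet_bddBelow P) ⟨Xc, hXcsup, rfl⟩
  · refine le_csInf ⟨_, Xc, hXcsup, rfl⟩ ?_
    rintro s ⟨Q, hQ, rfl⟩
    have hQpolar : Q ∈ sPolar C := (mem_sPolar_iff hne).2
      ⟨hQ.1, fun X hX => by rw [real_inner_comm]; exact (hQ.2.1 hX).2⟩
    have h0 : 0 ≤ ⟪P, Q⟫ := ((mem_sPolar_iff hne).1 hQpolar).2 P hPC
    have harc : Real.arccos ⟪P, Q⟫ ≤ π / 2 := by
      rw [Real.arccos_eq_pi_div_two_sub_arcsin]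
      linarith [Real.arcsin_nonneg.2 h0]
    linarith

end Stmt15Aux

/-- a spherically convex body `C ⊂ Sⁿ` is self-dual (`C = C°`)
iff it is of constant width `π/2`. -/
theorem stmt15 {n : ℕ} (C : Set (EuclideanSpace ℝ (Fin (n + 1))))
    (hC : sConvexBody C) :
    C = sPolar C ↔ constWidth C (π / 2) := by
  obtain ⟨hunit, hclosed, hconv, hE0, U, hU, hUne, hUsub⟩ := hC
  have hne : C.Nonempty := by
    obtain ⟨x, hx⟩ := hUne
    exact ⟨x, hUsub hx⟩
  constructor
  · exact Stmt15Aux.forward_dir hunit hne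
  · intro hW
    exact Set.Subset.antisymm
      (Stmt15Aux.self_subset_polar hunit hclosed hne hE0 hW)
      (Stmt15Aux.polar_subset_self hunit hclosed hconv hne hW)

end
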